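/- Let n ≥ m ≥ k ≥ 1 and let A be an m × n nonnegative real matrix with entries at most c. Then ‖A‖_{F_k} ≤ (1 + √k)√(mn) · c / 2. -/

import Mathlib

open Finset

/-- Singular values (unsorted) of a complex matrix: square roots of eigenvalues of `A * Aᴴ`. -/
noncomputable def svalC {m n : ℕ} (A : Matrix (Fin m) (Fin n) ℂ) : Fin m → ℝ :=
  fun i => Real.sqrt ((Matrix.isHermitian_mul_conjTranspose_self A).eigenvalues i)

/-- Singular values of a complex matrix sorted in decreasing order. -/
noncomputable def svalCSorted {m n : ℕ} (A : Matrix (Fin m) (Fin n) ℂ) : Fin m → ℝ :=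
  svalC A ∘ ⇑(Tuple.sort (fun i => -(svalC A i)))

/-- Singular values (unsorted) of a real matrix. -/
noncomputable def svalR {m n : ℕ} (A : Matrix (Fin m) (Fin n) ℝ) : Fin m → ℝ :=
  fun i => Real.sqrt ((Matrix.isHermitian_mul_conjTranspose_self A).eigenvalues i)

/-- Singular values of a real matrix sorted in decreasing order. -/
noncomputable def svalRSorted {m n : ℕ} (A : Matrix (Fin m) (Fin n) ℝ) : Fin m → ℝ :=
  svalR A ∘ ⇑(Tuple.sort (fun i => -(svalR A i)))

/-- Ky Fan `k`-norm of a complex matrix: the sum of its `k` largest singular values. -/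
noncomputable def kyFanC {m n : ℕ} (A : Matrix (Fin m) (Fin n) ℂ) (k : ℕ) : ℝ :=
  ∑ i : Fin m, if (i : ℕ) < k then svalCSorted A i else 0

/-- Ky Fan `k`-norm of a real matrix. -/
noncomputable def kyFanR {m n : ℕ} (A : Matrix (Fin m) (Fin n) ℝ) (k : ℕ) : ℝ :=
  ∑ i : Fin m, if (i : ℕ) < k then svalRSorted A i else 0

/-- The adjacency matrix of a simple graph is Hermitian (over `ℝ`). -/
lemma adjHerm {n : ℕ} (G : SimpleGraph (Fin n)) [DecidableRel G.Adj] :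
    (G.adjMatrix ℝ).IsHermitian := by
  have h := G.isSymm_adjMatrix (α := ℝ)
  first
  | exact (Matrix.conjTranspose_eq_transpose_of_trivial _).trans h
  | simpa [Matrix.IsHermitian, Matrix.conjTranspose, Matrix.IsSymm, Matrix.transpose, Matrix.map, starRingEnd_apply, star_trivial] using h

/-- Singular values of a graph (unsorted). -/
noncomputable def gsval {n : ℕ} (G : SimpleGraph (Fin n)) [DecidableRel G.Adj] : Fin n → ℝ :=
  svalR (G.adjMatrix ℝ)

/-- Singular values of a graph sorted in decreasing order. -/
noncomputable def gsvalSorted {n : ℕ} (G : SimpleGraph (Fin n)) [DecidableRel G.Adj] : Fin n → ℝ :=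
  svalRSorted (G.adjMatrix ℝ)

/-- Eigenvalues of a graph sorted in decreasing order: `geigSorted G 0 = μ₁ ≥ ⋯ ≥ μₙ`. -/
noncomputable def geigSorted {n : ℕ} (G : SimpleGraph (Fin n)) [DecidableRel G.Adj] : Fin n → ℝ :=
  (adjHerm G).eigenvalues ∘ ⇑(Tuple.sort (fun i => -((adjHerm G).eigenvalues i)))

/-- Ky Fan `k`-norm of a graph. -/
noncomputable def kyFanG {n : ℕ} (G : SimpleGraph (Fin n)) [DecidableRel G.Adj] (k : ℕ) : ℝ :=
  kyFanR (G.adjMatrix ℝ) k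


section KyFanAux

open Matrix

lemma dotAux_self_nonneg {n : ℕ} (x : Fin n → ℝ) : 0 ≤ dotProduct x x :=
  Finset.sum_nonneg fun _ _ => mul_self_nonneg _

lemma dotAux_sum_right {ι : Type*} {n : ℕ} (t : Finset ι) (w : Fin n → ℝ) (f : ι → Fin n → ℝ) :
    dotProduct w (∑ i ∈ t, f i) = ∑ i ∈ t, dotProduct w (f i) := by
  simp only [dotProduct, Finset.sum_apply, Finset.mul_sum]
  exact Finset.sum_comm

lemma dotAux_sum_left {ι : Type*} {n : ℕ} (t : Finset ι) (w : Fin n → ℝ) (f : ι → Fin n → ℝ) :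
    dotProduct (∑ i ∈ t, f i) w = ∑ i ∈ t, dotProduct (f i) w := by
  simp only [dotProduct, Finset.sum_apply, Finset.sum_mul]
  exact Finset.sum_comm

/-- Bessel's inequality for a finite orthonormal family, in raw `dotProduct` form. -/
lemma besselAux {ι : Type*} [DecidableEq ι] {n : ℕ} (t : Finset ι) (v : ι → Fin n → ℝ)
    (hv : ∀ i ∈ t, ∀ j ∈ t, dotProduct (v i) (v j) = if i = j then 1 else 0)
    (w : Fin n → ℝ) :
    ∑ i ∈ t, (dotProduct w (v i))^2 ≤ dotProduct w w := by
  set s : Fin n → ℝ := ∑ i ∈ t, (dotProduct w (v i)) • v i with hs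
  have hws : dotProduct w s = ∑ i ∈ t, (dotProduct w (v i))^2 := by
    rw [hs, dotAux_sum_right]
    refine Finset.sum_congr rfl fun i hi => ?_
    rw [dotProduct_smul, smul_eq_mul, sq]
  have hss : dotProduct s s = ∑ i ∈ t, (dotProduct w (v i))^2 := by
    rw [hs, dotAux_sum_left]
    refine Finset.sum_congr rfl fun i hi => ?_
    rw [smul_dotProduct, dotAux_sum_right, smul_eq_mul]
    rw [Finset.sum_eq_single i]
    · rw [dotProduct_smul, smul_eq_mul, hv i hi i hi, if_pos rfl, mul_one, sq]
    · intro j hj hji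
      rw [dotProduct_smul, smul_eq_mul, hv i hi j hj, if_neg (Ne.symm hji), mul_zero]
    · intro h; exact absurd hi h
  have h0 : 0 ≤ dotProduct (w - s) (w - s) := dotAux_self_nonneg _
  rw [sub_dotProduct, dotProduct_sub, dotProduct_sub,
    dotProduct_comm s w, hws, hss] at h0
  linarith

variable {m n : ℕ} (A : Matrix (Fin m) (Fin n) ℝ)

/-- Left singular vectors. -/
noncomputable def uvec : Fin m → (Fin m → ℝ) :=
  fun i => ⇑((Matrix.isHermitian_mul_conjTranspose_self A).eigenvectorBasis i)

/-- (Unnormalized when the singular value vanishes) right singular vectors. -/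
noncomputable def vvec : Fin m → (Fin n → ℝ) :=
  fun i => (svalR A i)⁻¹ • (Aᴴ *ᵥ uvec A i)

lemma uvec_dot (i j : Fin m) :
    dotProduct (uvec A i) (uvec A j) = if i = j then 1 else 0 := by
  have h := (Matrix.isHermitian_mul_conjTranspose_self A).eigenvectorBasis.orthonormal
  rw [orthonormal_iff_ite] at h
  have h2 := h i j
  simpa [PiLp.inner_apply, RCLike.inner_apply, conj_trivial, dotProduct, uvec, mul_comm] using h2

lemma mulvec_uvec (j : Fin m) :
    (A * Aᴴ) *ᵥ uvec A j
      = ((Matrix.isHermitian_mul_conjTranspose_self A).eigenvalues j) • uvec A j :=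
  (Matrix.isHermitian_mul_conjTranspose_self A).mulVec_eigenvectorBasis j

lemma conjT_mulVec (x : Fin m → ℝ) : Aᴴ *ᵥ x = x ᵥ* A := by
  ext q
  simp [Matrix.mulVec, Matrix.vecMul, dotProduct, Matrix.conjTranspose_apply, mul_comm]

lemma dot_ATu (i j : Fin m) :
    dotProduct (Aᴴ *ᵥ uvec A i) (Aᴴ *ᵥ uvec A j)
      = ((Matrix.isHermitian_mul_conjTranspose_self A).eigenvalues j)
        * (if i = j then 1 else 0) := by
  conv_lhs => rw [conjT_mulVec]
  rw [← Matrix.dotProduct_mulVec, Matrix.mulVec_mulVec, mulvec_uvec,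
    dotProduct_smul, smul_eq_mul, uvec_dot]

lemma expandB (c : ℝ) (u : Fin m → ℝ) (v : Fin n → ℝ) :
    u ⬝ᵥ ((Matrix.of fun p q => c - 2 * A p q) *ᵥ v)
      = c * (∑ p, u p) * (∑ q, v q) - 2 * (u ⬝ᵥ (A *ᵥ v)) := by
  have hL : u ⬝ᵥ ((Matrix.of fun p q => c - 2 * A p q) *ᵥ v)
      = ∑ p, ∑ q, (c * (u p * v q) - 2 * (u p * (A p q * v q))) := by
    simp only [dotProduct, Matrix.mulVec, Matrix.of_apply, Finset.mul_sum]
    exact Finset.sum_congr rfl fun p _ => Finset.sum_congr rfl fun q _ => by ring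
  have hR : u ⬝ᵥ (A *ᵥ v) = ∑ p, ∑ q, u p * (A p q * v q) := by
    simp only [dotProduct, Matrix.mulVec, Finset.mul_sum]
  rw [hL, hR, mul_assoc, Finset.sum_mul_sum]
  simp only [Finset.sum_sub_distrib, Finset.mul_sum]

end KyFanAux

open Matrix

/-- Ky Fan norm of a nonnegative matrix with entries at most `c`:
`‖A‖_{F_k} ≤ (1 + √k)√(mn) c / 2`. -/
theorem kyFan_le_nonneg {m n k : ℕ} (hk : 1 ≤ k) (hkm : k ≤ m) (hmn : m ≤ n)
    (A : Matrix (Fin m) (Fin n) ℝ) (c : ℝ) (hA : ∀ i j, 0 ≤ A i j) (hc : ∀ i j, A i j ≤ c) :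
    kyFanR A k ≤ (1 + Real.sqrt k) * Real.sqrt ((m : ℝ) * n) * c / 2 := by
    classical
  have hm : 0 < m := lt_of_lt_of_le hk hkm
  have hn : 0 < n := lt_of_lt_of_le hm hmn
  have hc0 : 0 ≤ c := le_trans (hA ⟨0, hm⟩ ⟨0, hn⟩) (hc ⟨0, hm⟩ ⟨0, hn⟩)
  have hμ0 : ∀ j, 0 ≤ (Matrix.isHermitian_mul_conjTranspose_self A).eigenvalues j :=
    fun j => Matrix.eigenvalues_self_mul_conjTranspose_nonneg A j
  set g := ⇑(Tuple.sort (fun i => -(svalR A i))) with hg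
  set s₀ : Finset (Fin m) :=
    Finset.univ.filter (fun i : Fin m => (i : ℕ) < k ∧ svalRSorted A i ≠ 0) with hs₀
  set t : Finset (Fin m) := s₀.image g with ht
  have hky : kyFanR A k = ∑ j ∈ t, svalR A j := by
    rw [kyFanR, ← Finset.sum_filter, ← Finset.sum_filter_ne_zero, Finset.filter_filter,
      ht, Finset.sum_image (fun a _ b _ h => (Tuple.sort _).injective h)]
    rfl
  have hcard : t.card ≤ k := by
    refine le_trans (Finset.card_image_le) (le_trans ?_ (Finset.card_range k).le)
    refine Finset.card_le_card_of_injOn (fun i => (i : ℕ)) ?_ ?_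
    · intro i hi
      rw [Finset.mem_coe, hs₀, Finset.mem_filter] at hi
      simpa using hi.2.1
    · exact fun a _ b _ h => Fin.val_injective h
  have hσt : ∀ j ∈ t, svalR A j ≠ 0 := by
    intro j hj
    rw [ht, Finset.mem_image] at hj
    obtain ⟨i, hi, rfl⟩ := hj
    rw [hs₀, Finset.mem_filter] at hi
    exact hi.2.2
  have hσsq : ∀ j, svalR A j ^ 2 = (Matrix.isHermitian_mul_conjTranspose_self A).eigenvalues j :=
    fun j => Real.sq_sqrt (hμ0 j)
  have hv_dot : ∀ i ∈ t, ∀ j ∈ t,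
      dotProduct (vvec A i) (vvec A j) = if i = j then 1 else 0 := by
    intro i hi j hj
    simp only [vvec]
    rw [smul_dotProduct, dotProduct_smul, dot_ATu,
      smul_eq_mul, smul_eq_mul]
    by_cases hij : i = j
    · subst hij
      rw [if_pos rfl, mul_one, ← hσsq i]
      field_simp [hσt i hi]
    · rw [if_neg hij, mul_zero, mul_zero, mul_zero]
  have hAv : ∀ j ∈ t, dotProduct (uvec A j) (A *ᵥ vvec A j) = svalR A j := by
    intro j hj
    simp only [vvec]
    rw [Matrix.mulVec_smul, Matrix.mulVec_mulVec, mulvec_uvec,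
      dotProduct_smul, dotProduct_smul, uvec_dot, if_pos rfl,
      smul_eq_mul, smul_eq_mul, mul_one, ← hσsq j]
    field_simp [hσt j hj]
  set B : Matrix (Fin m) (Fin n) ℝ := Matrix.of (fun p q => c - 2 * A p q) with hB
  set S := Real.sqrt ((m : ℝ) * (n : ℝ)) with hS
  have hpoint : ∀ j ∈ t, svalR A j
      = (c * ((∑ p, uvec A j p) * (∑ q, vvec A j q))
          - dotProduct (uvec A j) (B *ᵥ vvec A j)) / 2 := by
    intro j hj
    rw [hB, expandB, hAv j hj]
    ring
  have habsum : ∑ j ∈ t, (∑ p, uvec A j p) * (∑ q, vvec A j q) ≤ S := by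
    refine le_trans (Real.sum_mul_le_sqrt_mul_sqrt t _ _) ?_
    have hu2 : ∑ j ∈ t, (∑ p, uvec A j p) ^ 2 ≤ (m : ℝ) := by
      calc ∑ j ∈ t, (∑ p, uvec A j p) ^ 2
          = ∑ j ∈ t, (dotProduct (fun _ => (1 : ℝ)) (uvec A j)) ^ 2 := by
            simp [dotProduct]
        _ ≤ dotProduct (fun _ => (1 : ℝ)) (fun _ => (1 : ℝ)) :=
            besselAux t (uvec A) (fun i _ j _ => uvec_dot A i j) _
        _ = (m : ℝ) := by simp [dotProduct]
    have hv2 : ∑ j ∈ t, (∑ q, vvec A j q) ^ 2 ≤ (n : ℝ) := by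
      calc ∑ j ∈ t, (∑ q, vvec A j q) ^ 2
          = ∑ j ∈ t, (dotProduct (fun _ => (1 : ℝ)) (vvec A j)) ^ 2 := by
            simp [dotProduct]
        _ ≤ dotProduct (fun _ => (1 : ℝ)) (fun _ => (1 : ℝ)) :=
            besselAux t (vvec A) hv_dot _
        _ = (n : ℝ) := by simp [dotProduct]
    calc Real.sqrt (∑ j ∈ t, (∑ p, uvec A j p) ^ 2)
          * Real.sqrt (∑ j ∈ t, (∑ q, vvec A j q) ^ 2)
        ≤ Real.sqrt (m : ℝ) * Real.sqrt (n : ℝ) :=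
          mul_le_mul (Real.sqrt_le_sqrt hu2) (Real.sqrt_le_sqrt hv2)
            (Real.sqrt_nonneg _) (Real.sqrt_nonneg _)
      _ = S := (Real.sqrt_mul (Nat.cast_nonneg m) _).symm
  have hBsum : ∑ j ∈ t, (-(dotProduct (uvec A j) (B *ᵥ vvec A j)))
      ≤ Real.sqrt k * (S * c) := by
    have hterm : ∀ j ∈ t, -(dotProduct (uvec A j) (B *ᵥ vvec A j))
        ≤ Real.sqrt (dotProduct (B *ᵥ vvec A j) (B *ᵥ vvec A j)) := by
      intro j hj
      have h1 := Real.sum_mul_le_sqrt_mul_sqrt Finset.univ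
        (fun p => -(uvec A j p)) (fun p => (B *ᵥ vvec A j) p)
      have hL : ∑ p, (-(uvec A j p)) * (B *ᵥ vvec A j) p
          = -(dotProduct (uvec A j) (B *ᵥ vvec A j)) := by
        simp [dotProduct]
      have hR1 : (∑ p, (-(uvec A j p)) ^ 2) = 1 := by
        have h2 := uvec_dot A j j
        rw [if_pos rfl] at h2
        rw [← h2]
        simp only [dotProduct, sq, neg_mul_neg]
      have hR2 : (∑ p, ((B *ᵥ vvec A j) p) ^ 2)
          = dotProduct (B *ᵥ vvec A j) (B *ᵥ vvec A j) := by
        simp only [dotProduct, sq]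
      rw [hL, hR1, hR2, Real.sqrt_one, one_mul] at h1
      exact h1
    have hsum2 : ∑ j ∈ t, dotProduct (B *ᵥ vvec A j) (B *ᵥ vvec A j)
        ≤ (m : ℝ) * n * c ^ 2 := by
      have heq : ∀ j, dotProduct (B *ᵥ vvec A j) (B *ᵥ vvec A j)
          = ∑ r, (dotProduct (fun q => B r q) (vvec A j)) ^ 2 := by
        intro j
        simp only [dotProduct, Matrix.mulVec, sq]
      calc ∑ j ∈ t, dotProduct (B *ᵥ vvec A j) (B *ᵥ vvec A j)
          = ∑ r, ∑ j ∈ t, (dotProduct (fun q => B r q) (vvec A j)) ^ 2 := by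
            rw [Finset.sum_congr rfl (fun j _ => heq j)]
            exact Finset.sum_comm
        _ ≤ ∑ r : Fin m, dotProduct (fun q => B r q) (fun q => B r q) :=
            Finset.sum_le_sum fun r _ => besselAux t (vvec A) hv_dot _
        _ ≤ ∑ _r : Fin m, (n : ℝ) * c ^ 2 := by
            refine Finset.sum_le_sum fun r _ => ?_
            calc dotProduct (fun q => B r q) (fun q => B r q)
                = ∑ q, (B r q) ^ 2 := by simp only [dotProduct, sq]
              _ ≤ ∑ _q : Fin n, c ^ 2 := by
                  refine Finset.sum_le_sum fun q _ => ?_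
                  have h1 := hA r q
                  have h2 := hc r q
                  have hBrq : B r q = c - 2 * A r q := rfl
                  rw [hBrq]
                  nlinarith
              _ = (n : ℝ) * c ^ 2 := by simp [Finset.sum_const, mul_comm]
        _ = (m : ℝ) * n * c ^ 2 := by
            rw [Finset.sum_const]
            simp [mul_assoc, mul_comm]
    calc ∑ j ∈ t, (-(dotProduct (uvec A j) (B *ᵥ vvec A j)))
        ≤ ∑ j ∈ t, Real.sqrt (dotProduct (B *ᵥ vvec A j) (B *ᵥ vvec A j)) :=
          Finset.sum_le_sum hterm
      _ ≤ Real.sqrt t.card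
            * Real.sqrt (∑ j ∈ t, dotProduct (B *ᵥ vvec A j) (B *ᵥ vvec A j)) := by
          have h1 := Real.sum_mul_le_sqrt_mul_sqrt t (fun _ => (1 : ℝ))
            (fun j => Real.sqrt (dotProduct (B *ᵥ vvec A j) (B *ᵥ vvec A j)))
          have h2 : ∑ j ∈ t, (Real.sqrt (dotProduct (B *ᵥ vvec A j) (B *ᵥ vvec A j))) ^ 2
              = ∑ j ∈ t, dotProduct (B *ᵥ vvec A j) (B *ᵥ vvec A j) :=
            Finset.sum_congr rfl fun j _ => Real.sq_sqrt (dotAux_self_nonneg _)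
          simpa [h2, Finset.sum_const, nsmul_eq_mul] using h1
      _ ≤ Real.sqrt k * (S * c) := by
          refine mul_le_mul ?_ ?_ (Real.sqrt_nonneg _) (Real.sqrt_nonneg _)
          · exact Real.sqrt_le_sqrt (by exact_mod_cast hcard)
          · calc Real.sqrt (∑ j ∈ t, dotProduct (B *ᵥ vvec A j) (B *ᵥ vvec A j))
                ≤ Real.sqrt ((m : ℝ) * n * c ^ 2) := Real.sqrt_le_sqrt hsum2
              _ = S * c := by
                  rw [Real.sqrt_mul (by positivity), Real.sqrt_sq hc0, hS]
  calc kyFanR A k = ∑ j ∈ t, svalR A j := hky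
    _ = (c * (∑ j ∈ t, (∑ p, uvec A j p) * (∑ q, vvec A j q))
          + ∑ j ∈ t, (-(dotProduct (uvec A j) (B *ᵥ vvec A j)))) / 2 := by
        rw [Finset.sum_congr rfl hpoint, ← Finset.sum_div, Finset.mul_sum]
        congr 1
        rw [← Finset.sum_add_distrib]
        exact Finset.sum_congr rfl fun j _ => by ring
    _ ≤ (c * S + Real.sqrt k * (S * c)) / 2 := by
        have h1 : c * (∑ j ∈ t, (∑ p, uvec A j p) * (∑ q, vvec A j q)) ≤ c * S :=
          mul_le_mul_of_nonneg_left habsum hc0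
        linarith [hBsum]
    _ = (1 + Real.sqrt k) * S * c / 2 := by ring
    _ = (1 + Real.sqrt k) * Real.sqrt ((m : ℝ) * n) * c / 2 := by rw [hS]
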